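/- Fourth moment bound for the swapped increment: In the Lindeberg step for quadratic forms, E[(W_k − W_{k,0})⁴] ≤ 3ρ Inf_k², where W_k − W_{k,0} = Σ_{i<k} w_{i,k}(ηᵢ,ξ_k) + Σ_{j>k} w_{k,j}(ξ_k,ξⱼ), ρ is the uniform fourth-moment ratio bound (E of any fourth power of a kernel ≤ ρ σ_{i,j}⁴), and Inf_k = Σ_{i<k} σ_{i,k}² + Σ_{j>k} σ_{k,j}². -/

import Mathlib

open Finset MeasureTheory ProbabilityTheory
set_option linter.unusedSectionVars false
set_option maxHeartbeats 1000000

section Basic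
variable {Ω : Type*} [MeasurableSpace Ω] {μ : Measure Ω}

lemma abs_pow_le_one_add_pow_four (x : ℝ) {j : ℕ} (hj : j ≤ 4) : |x| ^ j ≤ 1 + x ^ 4 := by
  have hx : (0:ℝ) ≤ |x| := abs_nonneg x
  have h4 : |x| ^ 4 = x ^ 4 := by
    rw [← abs_pow, abs_of_nonneg (by positivity)]
  rcases le_total |x| 1 with h | h
  · have : |x| ^ j ≤ 1 := pow_le_one₀ hx h
    nlinarith [pow_nonneg (by positivity : (0:ℝ) ≤ x^2) 2]
  · have : |x| ^ j ≤ |x| ^ 4 := pow_le_pow_right₀ h hj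
    nlinarith

/-- On a finite measure, integrability of `f^4` gives integrability of `f^j` for `j ≤ 4`. -/
lemma integrable_pow_of_integrable_pow_four [IsFiniteMeasure μ] {f : Ω → ℝ}
    (hm : AEStronglyMeasurable f μ) (h4 : Integrable (fun ω => f ω ^ 4) μ)
    {j : ℕ} (hj : j ≤ 4) : Integrable (fun ω => f ω ^ j) μ := by
  have hb : Integrable (fun ω => 1 + f ω ^ 4) μ := (integrable_const 1).add h4
  refine hb.mono' (hm.pow _) ?_
  filter_upwards with ω
  calc ‖f ω ^ j‖ = |f ω| ^ j := by rw [Real.norm_eq_abs, abs_pow]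
    _ ≤ 1 + f ω ^ 4 := abs_pow_le_one_add_pow_four (f ω) hj

/-- `(∫ f)² ≤ ∫ f²` on a probability measure. -/
lemma sq_integral_le_integral_sq [IsProbabilityMeasure μ] {f : Ω → ℝ}
    (hf : Integrable f μ) (hf2 : Integrable (fun ω => f ω ^ 2) μ) :
    (∫ ω, f ω ∂μ) ^ 2 ≤ ∫ ω, f ω ^ 2 ∂μ := by
  set c := ∫ ω, f ω ∂μ with hc
  have h0 : 0 ≤ ∫ ω, (f ω - c) ^ 2 ∂μ := integral_nonneg fun ω => by positivity
  have hexp : ∀ ω, (f ω - c) ^ 2 = (f ω ^ 2 - 2 * c * f ω) + c ^ 2 := fun ω => by ring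
  have i1 : Integrable (fun ω => f ω ^ 2 - 2 * c * f ω) μ := hf2.sub (hf.const_mul (2*c))
  rw [integral_congr_ae (Filter.Eventually.of_forall hexp),
    integral_add i1 (integrable_const _), integral_sub hf2 (hf.const_mul (2*c)),
    integral_const_mul, integral_const] at h0
  simp only [measure_univ, ENNReal.toReal_one, smul_eq_mul, one_mul, probReal_univ] at h0
  nlinarith

/-- Cauchy–Schwarz for integrals. -/
lemma integral_mul_le_sqrt_mul_sqrt {f g : Ω → ℝ}
    (hf2 : Integrable (fun ω => f ω ^ 2) μ) (hg2 : Integrable (fun ω => g ω ^ 2) μ)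
    (hfg : Integrable (fun ω => f ω * g ω) μ) :
    ∫ ω, f ω * g ω ∂μ ≤ Real.sqrt (∫ ω, f ω ^ 2 ∂μ) * Real.sqrt (∫ ω, g ω ^ 2 ∂μ) := by
  set A := ∫ ω, f ω ^ 2 ∂μ with hA
  set B := ∫ ω, g ω ^ 2 ∂μ with hB
  have hA0 : 0 ≤ A := integral_nonneg fun ω => sq_nonneg _
  have hB0 : 0 ≤ B := integral_nonneg fun ω => sq_nonneg _
  have key : ∀ c : ℝ, 0 < c → ∫ ω, f ω * g ω ∂μ ≤ (c * A + B / c) / 2 := by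
    intro c hc
    have hpt : ∀ ω, f ω * g ω ≤ (c * f ω ^ 2 + g ω ^ 2 / c) / 2 := by
      intro ω
      rw [le_div_iff₀ (by norm_num : (0:ℝ) < 2), ← sub_nonneg]
      have key0 : c * f ω ^ 2 + g ω ^ 2 / c - (f ω * g ω) * 2
          = (c * f ω - g ω) ^ 2 / c := by field_simp; ring
      rw [key0]; positivity
    have hint : Integrable (fun ω => (c * f ω ^ 2 + g ω ^ 2 / c) / 2) μ :=
      (((hf2.const_mul c).add (hg2.div_const c)).div_const 2)
    calc ∫ ω, f ω * g ω ∂μ ≤ ∫ ω, (c * f ω ^ 2 + g ω ^ 2 / c) / 2 ∂μ :=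
          integral_mono hfg hint hpt
      _ = (c * A + B / c) / 2 := by
          rw [integral_div, integral_add (hf2.const_mul c) (hg2.div_const c),
            integral_const_mul, integral_div]
  rcases eq_or_lt_of_le hA0 with hA0' | hApos
  · have hle : ∫ ω, f ω * g ω ∂μ ≤ 0 := by
      refine le_of_forall_pos_le_add fun ε hε => ?_
      obtain ⟨n, hn⟩ := exists_nat_gt (B / (2 * ε))
      have hn0 : (0:ℝ) < n := lt_of_le_of_lt (by positivity) hn
      have h1 := key n hn0
      rw [← hA0'] at h1
      have h2 : B / (2 * (n:ℝ)) ≤ ε := by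
        rw [div_le_iff₀ (by positivity)]
        rw [div_lt_iff₀ (by positivity)] at hn
        linarith
      calc ∫ ω, f ω * g ω ∂μ ≤ ((n:ℝ) * 0 + B / n) / 2 := h1
        _ = B / (2 * n) := by ring
        _ ≤ ε := h2
        _ = 0 + ε := by ring
    rw [← hA0', Real.sqrt_zero, zero_mul]
    exact hle
  · rcases eq_or_lt_of_le hB0 with hB0' | hBpos
    · have hle : ∫ ω, f ω * g ω ∂μ ≤ 0 := by
        refine le_of_forall_pos_le_add fun ε hε => ?_
        obtain ⟨n, hn⟩ := exists_nat_gt (A / (2 * ε))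
        have hn0 : (0:ℝ) < n := lt_of_le_of_lt (by positivity) hn
        have h1 := key (1/n) (by positivity)
        rw [← hB0'] at h1
        have h2 : A / (2 * (n:ℝ)) ≤ ε := by
          rw [div_le_iff₀ (by positivity)]
          rw [div_lt_iff₀ (by positivity)] at hn
          linarith
        have h3 : ((1/(n:ℝ)) * A + 0 / (1/(n:ℝ))) / 2 = A / (2 * n) := by
          rw [zero_div, add_zero]; ring
        calc ∫ ω, f ω * g ω ∂μ ≤ ((1/(n:ℝ)) * A + 0 / (1/(n:ℝ))) / 2 := h1
          _ = A / (2 * n) := h3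
          _ ≤ ε := h2
          _ = 0 + ε := by ring
      rw [← hB0', Real.sqrt_zero, mul_zero]
      exact hle
    · have h1 := key (Real.sqrt B / Real.sqrt A) (by positivity)
      have hsA : Real.sqrt A ^ 2 = A := Real.sq_sqrt hApos.le
      have hsB : Real.sqrt B ^ 2 = B := Real.sq_sqrt hBpos.le
      have hsA0 : (0:ℝ) < Real.sqrt A := Real.sqrt_pos.2 hApos
      have hsB0 : (0:ℝ) < Real.sqrt B := Real.sqrt_pos.2 hBpos
      have h2 : ((Real.sqrt B / Real.sqrt A) * A + B / (Real.sqrt B / Real.sqrt A)) / 2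
          = Real.sqrt A * Real.sqrt B := by
        field_simp
        nlinarith
      linarith [h1, h2.symm.le]
end Basic


section PiMeasure
variable {ι : Type*} [Fintype ι] {X : Type*} [MeasurableSpace X]
  (κ : ι → Measure X) [∀ i, IsProbabilityMeasure (κ i)]

lemma map_eval_pi (i : ι) : (Measure.pi κ).map (fun x => x i) = κ i := by
  classical
  ext s hs
  rw [Measure.map_apply (measurable_pi_apply i) hs, Set.eval_preimage, Measure.pi_pi,
    Finset.prod_eq_single i]
  · simp
  · intro b _ hb; simp [Function.update_of_ne hb]
  · simp

lemma iIndepFun_eval_pi : iIndepFun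
    (fun i (x : ι → X) => x i) (Measure.pi κ) := by
  classical
  rw [iIndepFun_iff_measure_inter_preimage_eq_mul]
  intro S sets hsets
  have h1 : (⋂ i ∈ S, (fun x : ι → X => x i) ⁻¹' sets i)
      = Set.pi Set.univ (fun j => if j ∈ S then sets j else Set.univ) := by
    ext x
    simp only [Set.mem_iInter, Set.mem_preimage, Set.mem_pi, Set.mem_univ, true_imp_iff]
    constructor
    · intro h j
      by_cases hj : j ∈ S
      · simpa [hj] using h j hj
      · simp [hj]
    · intro h j hj
      have := h j
      simpa [hj] using this
  rw [h1, Measure.pi_pi, ← Finset.prod_subset (Finset.subset_univ S)]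
  · refine Finset.prod_congr rfl fun i hi => ?_
    rw [show (Measure.pi κ) ((fun x : ι → X => x i) ⁻¹' sets i)
        = ((Measure.pi κ).map (fun x => x i)) (sets i) from
        (Measure.map_apply (measurable_pi_apply i) (hsets i hi)).symm, map_eval_pi κ i]
    simp [hi]
  · intro i _ hi
    simp [hi]

end PiMeasure

section Core
variable {ι : Type*} [Fintype ι] {X : Type*} [MeasurableSpace X]
  {κ : ι → Measure X} [∀ i, IsProbabilityMeasure (κ i)] {f : ι → X → ℝ}

lemma integrable_comp_eval {h : X → ℝ} (hm : Measurable h) (i : ι) :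
    Integrable (fun x : ι → X => h (x i)) (Measure.pi κ) ↔ Integrable h (κ i) := by
  rw [← map_eval_pi κ i] at *
  rw [integrable_map_measure hm.aestronglyMeasurable (measurable_pi_apply i).aemeasurable]
  rfl

lemma integral_comp_eval {h : X → ℝ} (hm : Measurable h) (i : ι) :
    ∫ x, h (x i) ∂Measure.pi κ = ∫ t, h t ∂κ i := by
  conv_rhs => rw [← map_eval_pi κ i]
  rw [integral_map (measurable_pi_apply i).aemeasurable hm.aestronglyMeasurable]

lemma indepFun_eval_sum (hmeas : ∀ i, Measurable (f i)) {a : ι} {s : Finset ι} (ha : a ∉ s) :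
    IndepFun (fun x : ι → X => f a (x a)) (fun x : ι → X => ∑ i ∈ s, f i (x i))
      (Measure.pi κ) := by
  classical
  have base := (iIndepFun_eval_pi κ).indepFun_finset {a} s
    (Finset.disjoint_singleton_left.2 ha) (fun i => measurable_pi_apply i)
  have h1 := base.comp
    (φ := fun y : ({a} : Finset ι) → X => f a (y ⟨a, Finset.mem_singleton_self a⟩))
    (ψ := fun y : {i // i ∈ s} → X => ∑ i : {i // i ∈ s}, f (i : ι) (y i))
    ((hmeas a).comp (measurable_pi_apply _))
    (Finset.measurable_sum Finset.univ fun i _ => (hmeas i).comp (measurable_pi_apply _))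
  have e1 : ((fun y : ({a} : Finset ι) → X => f a (y ⟨a, Finset.mem_singleton_self a⟩)) ∘
      (fun x (i : ({a} : Finset ι)) => x (i : ι))) = fun x : ι → X => f a (x a) := rfl
  have e2 : ((fun y : {i // i ∈ s} → X => ∑ i : {i // i ∈ s}, f (i : ι) (y i)) ∘
      (fun x (i : {i // i ∈ s}) => x (i : ι))) = fun x : ι → X => ∑ i ∈ s, f i (x i) := by
    funext x
    simp only [Function.comp_apply]
    exact Finset.sum_coe_sort s (fun i => f i (x i))
  rwa [e1, e2] at h1

lemma IndepFun.pow_pow {Ω' : Type*} [MeasurableSpace Ω'] {μ' : Measure Ω'} {F G : Ω' → ℝ}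
    (h : IndepFun F G μ') (p q : ℕ) :
    IndepFun (fun x => F x ^ p) (fun x => G x ^ q) μ' :=
  h.comp (measurable_id.pow_const p) (measurable_id.pow_const q)

/-- Pointwise bound `(∑ i ∈ s, y i)^4 ≤ (#s)^3 * ∑ i ∈ s, (y i)^4`. -/
lemma sum_pow_four_le {s : Finset ι} (y : ι → ℝ) :
    (∑ i ∈ s, y i) ^ 4 ≤ (s.card : ℝ) ^ 3 * ∑ i ∈ s, y i ^ 4 := by
  classical
  rcases Finset.eq_empty_or_nonempty s with rfl | hs
  · simp
  have hcard : (0:ℝ) < (s.card : ℝ) ^ 3 := by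
    have := Finset.card_pos.2 hs; positivity
  have h1 : |∑ i ∈ s, y i| ≤ ∑ i ∈ s, |y i| := Finset.abs_sum_le_sum_abs _ _
  have h2 : (∑ i ∈ s, |y i|) ^ (3+1) / (s.card : ℝ) ^ 3 ≤ ∑ i ∈ s, |y i| ^ (3+1) :=
    pow_sum_div_card_le_sum_pow (fun i _ => abs_nonneg (y i)) 3
  have h3 : (∑ i ∈ s, y i) ^ 4 ≤ (∑ i ∈ s, |y i|) ^ 4 := by
    calc (∑ i ∈ s, y i) ^ 4 = |∑ i ∈ s, y i| ^ 4 := by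
          rw [← abs_pow, abs_of_nonneg (by positivity)]
      _ ≤ (∑ i ∈ s, |y i|) ^ 4 := by
          exact pow_le_pow_left₀ (abs_nonneg _) h1 4
  have h4 : ∑ i ∈ s, |y i| ^ 4 = ∑ i ∈ s, y i ^ 4 := by
    refine Finset.sum_congr rfl fun i _ => ?_
    rw [← abs_pow, abs_of_nonneg (by positivity)]
  rw [div_le_iff₀ hcard] at h2
  calc (∑ i ∈ s, y i) ^ 4 ≤ (∑ i ∈ s, |y i|) ^ 4 := h3
    _ ≤ (∑ i ∈ s, |y i| ^ (3+1)) * (s.card : ℝ) ^ 3 := h2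
    _ = (s.card : ℝ) ^ 3 * ∑ i ∈ s, y i ^ 4 := by rw [h4]; ring

end Core


section Core2
variable {ι : Type*} [Fintype ι] [DecidableEq ι] {X : Type*} [MeasurableSpace X]
  {κ : ι → Measure X} [∀ i, IsProbabilityMeasure (κ i)] {f : ι → X → ℝ}

theorem pi_moments (hmeas : ∀ i, Measurable (f i))
    (hint4 : ∀ i, Integrable (fun t => f i t ^ 4) (κ i))
    (hmean : ∀ i, ∫ t, f i t ∂κ i = 0) (s : Finset ι) :
    (∫ x, (∑ i ∈ s, f i (x i)) ^ 2 ∂Measure.pi κ) = (∑ i ∈ s, ∫ t, f i t ^ 2 ∂κ i) ∧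
    (∫ x, (∑ i ∈ s, f i (x i)) ^ 4 ∂Measure.pi κ)
      = (∑ i ∈ s, ∫ t, f i t ^ 4 ∂κ i)
        + 3 * ∑ i ∈ s, ∑ j ∈ s.erase i,
            (∫ t, f i t ^ 2 ∂κ i) * (∫ t, f j t ^ 2 ∂κ j) := by
  classical
  set π := Measure.pi κ with hπ
  set V : ι → ℝ := fun i => ∫ t, f i t ^ 2 ∂κ i with hV
  set Q : ι → ℝ := fun i => ∫ t, f i t ^ 4 ∂κ i with hQ
  have hfj : ∀ (i : ι) (j : ℕ), j ≤ 4 → Integrable (fun t => f i t ^ j) (κ i) := fun i j hj =>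
    integrable_pow_of_integrable_pow_four (hmeas i).aestronglyMeasurable (hint4 i) hj
  have hgmeas : ∀ i, Measurable (fun x : ι → X => f i (x i)) := fun i =>
    (hmeas i).comp (measurable_pi_apply i)
  have hgint : ∀ (i : ι) (j : ℕ), j ≤ 4 → Integrable (fun x : ι → X => f i (x i) ^ j) π :=
    fun i j hj => (integrable_comp_eval ((hmeas i).pow_const j) i).2 (hfj i j hj)
  have hgintegral : ∀ (i : ι) (j : ℕ), ∫ x, f i (x i) ^ j ∂π = ∫ t, f i t ^ j ∂κ i :=
    fun i j => integral_comp_eval ((hmeas i).pow_const j) i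
  have hSmeas : ∀ u : Finset ι, Measurable (fun x : ι → X => ∑ i ∈ u, f i (x i)) :=
    fun u => Finset.measurable_sum u (fun i _ => hgmeas i)
  have hS4 : ∀ u : Finset ι, Integrable (fun x : ι → X => (∑ i ∈ u, f i (x i)) ^ 4) π := by
    intro u
    have hbnd : Integrable (fun x : ι → X => (u.card:ℝ)^3 * ∑ i ∈ u, f i (x i) ^ 4) π :=
      (integrable_finset_sum u (fun i _ => hgint i 4 le_rfl)).const_mul _
    refine hbnd.mono' ((hSmeas u).pow_const 4).aestronglyMeasurable ?_
    filter_upwards with x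
    rw [Real.norm_eq_abs, abs_of_nonneg (by positivity)]
    exact sum_pow_four_le _
  have hSj : ∀ (u : Finset ι) (j : ℕ), j ≤ 4 →
      Integrable (fun x : ι → X => (∑ i ∈ u, f i (x i)) ^ j) π := fun u j hj =>
    integrable_pow_of_integrable_pow_four (hSmeas u).aestronglyMeasurable (hS4 u) hj
  have hS1 : ∀ u : Finset ι, ∫ x, (∑ i ∈ u, f i (x i)) ∂π = 0 := by
    intro u
    rw [integral_finset_sum u (fun i _ => by
      have := hgint i 1 (by norm_num); simpa using this)]
    refine Finset.sum_eq_zero fun i _ => ?_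
    rw [integral_comp_eval (hmeas i) i, hmean i]
  induction s using Finset.induction_on with
  | empty => simp
  | @insert a s ha ih =>
    obtain ⟨ih2, ih4⟩ := ih
    have hInd := indepFun_eval_sum (κ := κ) hmeas ha
    have hIndpq : ∀ p q : ℕ, IndepFun (fun x : ι → X => f a (x a) ^ p)
        (fun x : ι → X => (∑ i ∈ s, f i (x i)) ^ q) π := fun p q => IndepFun.pow_pow hInd p q
    -- integrability of all cross terms
    have t31 : Integrable (fun x : ι → X => f a (x a) ^ 3 * (∑ i ∈ s, f i (x i)) ^ 1) π :=
      (hIndpq 3 1).integrable_mul (hgint a 3 (by norm_num)) (hSj s 1 (by norm_num))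
    have t22 : Integrable (fun x : ι → X => f a (x a) ^ 2 * (∑ i ∈ s, f i (x i)) ^ 2) π :=
      (hIndpq 2 2).integrable_mul (hgint a 2 (by norm_num)) (hSj s 2 (by norm_num))
    have t13 : Integrable (fun x : ι → X => f a (x a) ^ 1 * (∑ i ∈ s, f i (x i)) ^ 3) π :=
      (hIndpq 1 3).integrable_mul (hgint a 1 (by norm_num)) (hSj s 3 (by norm_num))
    have t11 : Integrable (fun x : ι → X => f a (x a) ^ 1 * (∑ i ∈ s, f i (x i)) ^ 1) π :=
      (hIndpq 1 1).integrable_mul (hgint a 1 (by norm_num)) (hSj s 1 (by norm_num))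
    -- the integrals of cross terms
    have e31 : ∫ x, f a (x a) ^ 3 * (∑ i ∈ s, f i (x i)) ^ 1 ∂π
        = (∫ x, f a (x a) ^ 3 ∂π) * ∫ x, (∑ i ∈ s, f i (x i)) ^ 1 ∂π :=
      (hIndpq 3 1).integral_mul_eq_mul_integral (hgint a 3 (by norm_num)).1 (hSj s 1 (by norm_num)).1
    have e22 : ∫ x, f a (x a) ^ 2 * (∑ i ∈ s, f i (x i)) ^ 2 ∂π
        = (∫ x, f a (x a) ^ 2 ∂π) * ∫ x, (∑ i ∈ s, f i (x i)) ^ 2 ∂π :=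
      (hIndpq 2 2).integral_mul_eq_mul_integral (hgint a 2 (by norm_num)).1 (hSj s 2 (by norm_num)).1
    have e13 : ∫ x, f a (x a) ^ 1 * (∑ i ∈ s, f i (x i)) ^ 3 ∂π
        = (∫ x, f a (x a) ^ 1 ∂π) * ∫ x, (∑ i ∈ s, f i (x i)) ^ 3 ∂π :=
      (hIndpq 1 3).integral_mul_eq_mul_integral (hgint a 1 (by norm_num)).1 (hSj s 3 (by norm_num)).1
    have e11 : ∫ x, f a (x a) ^ 1 * (∑ i ∈ s, f i (x i)) ^ 1 ∂π
        = (∫ x, f a (x a) ^ 1 ∂π) * ∫ x, (∑ i ∈ s, f i (x i)) ^ 1 ∂π :=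
      (hIndpq 1 1).integral_mul_eq_mul_integral (hgint a 1 (by norm_num)).1 (hSj s 1 (by norm_num)).1
    have hSpow1 : ∫ x, (∑ i ∈ s, f i (x i)) ^ 1 ∂π = 0 := by simpa using hS1 s
    have hg1 : ∫ x, f a (x a) ^ 1 ∂π = 0 := by
      rw [hgintegral a 1]; simpa using hmean a
    constructor
    · -- second moment
      have key : ∀ x : ι → X, (∑ i ∈ insert a s, f i (x i)) ^ 2
          = f a (x a) ^ 2 + (2 * (f a (x a) ^ 1 * (∑ i ∈ s, f i (x i)) ^ 1)
            + (∑ i ∈ s, f i (x i)) ^ 2) := by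
        intro x; rw [Finset.sum_insert ha]; ring
      simp_rw [key]
      have A2 : Integrable (fun x : ι → X =>
          2 * (f a (x a) ^ 1 * (∑ i ∈ s, f i (x i)) ^ 1)) π := by
        exact t11.const_mul 2
      have A1 : Integrable (fun x : ι → X =>
          2 * (f a (x a) ^ 1 * (∑ i ∈ s, f i (x i)) ^ 1) + (∑ i ∈ s, f i (x i)) ^ 2) π := by
        exact A2.add (hSj s 2 (by norm_num))
      rw [integral_add (hgint a 2 (by norm_num)) A1,
        integral_add A2 (hSj s 2 (by norm_num)),
        integral_const_mul, e11, hSpow1, ih2, hgintegral a 2, Finset.sum_insert ha]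
      ring
    · -- fourth moment
      have key : ∀ x : ι → X, (∑ i ∈ insert a s, f i (x i)) ^ 4
          = f a (x a) ^ 4 + (4 * (f a (x a) ^ 3 * (∑ i ∈ s, f i (x i)) ^ 1)
            + (6 * (f a (x a) ^ 2 * (∑ i ∈ s, f i (x i)) ^ 2)
            + (4 * (f a (x a) ^ 1 * (∑ i ∈ s, f i (x i)) ^ 3)
            + (∑ i ∈ s, f i (x i)) ^ 4))) := by
        intro x; rw [Finset.sum_insert ha]; ring
      simp_rw [key]
      have B31 : Integrable (fun x : ι → X =>
          4 * (f a (x a) ^ 3 * (∑ i ∈ s, f i (x i)) ^ 1)) π := by exact t31.const_mul 4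
      have B22 : Integrable (fun x : ι → X =>
          6 * (f a (x a) ^ 2 * (∑ i ∈ s, f i (x i)) ^ 2)) π := by exact t22.const_mul 6
      have B13 : Integrable (fun x : ι → X =>
          4 * (f a (x a) ^ 1 * (∑ i ∈ s, f i (x i)) ^ 3)) π := by exact t13.const_mul 4
      have C3 : Integrable (fun x : ι → X =>
          4 * (f a (x a) ^ 1 * (∑ i ∈ s, f i (x i)) ^ 3) + (∑ i ∈ s, f i (x i)) ^ 4) π := by
        exact B13.add (hSj s 4 le_rfl)
      have C2 : Integrable (fun x : ι → X =>
          6 * (f a (x a) ^ 2 * (∑ i ∈ s, f i (x i)) ^ 2)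
          + (4 * (f a (x a) ^ 1 * (∑ i ∈ s, f i (x i)) ^ 3) + (∑ i ∈ s, f i (x i)) ^ 4)) π := by
        exact B22.add C3
      have C1 : Integrable (fun x : ι → X =>
          4 * (f a (x a) ^ 3 * (∑ i ∈ s, f i (x i)) ^ 1)
          + (6 * (f a (x a) ^ 2 * (∑ i ∈ s, f i (x i)) ^ 2)
          + (4 * (f a (x a) ^ 1 * (∑ i ∈ s, f i (x i)) ^ 3) + (∑ i ∈ s, f i (x i)) ^ 4))) π := by
        exact B31.add C2
      rw [integral_add (hgint a 4 (by norm_num)) C1,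
        integral_add B31 C2,
        integral_add B22 C3,
        integral_add B13 (hSj s 4 le_rfl),
        integral_const_mul, integral_const_mul, integral_const_mul,
        e31, e22, e13, hSpow1, hg1, ih4, ih2, hgintegral a 4, hgintegral a 2]
      -- algebraic bookkeeping on the index sums
      have hpair : ∑ i ∈ insert a s, ∑ j ∈ (insert a s).erase i, V i * V j
          = 2 * (V a * ∑ i ∈ s, V i) + ∑ i ∈ s, ∑ j ∈ s.erase i, V i * V j := by
        rw [Finset.sum_insert ha, Finset.erase_insert ha]
        have hstep : ∀ i ∈ s, ∑ j ∈ (insert a s).erase i, V i * V j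
            = V i * V a + ∑ j ∈ s.erase i, V i * V j := by
          intro i hi
          have hia : i ≠ a := fun h => ha (h ▸ hi)
          rw [Finset.erase_insert_of_ne hia.symm,
            Finset.sum_insert (fun h => ha (Finset.mem_of_mem_erase h))]
        rw [Finset.sum_congr rfl hstep, Finset.sum_add_distrib]
        have : ∑ i ∈ s, V i * V a = V a * ∑ i ∈ s, V i := by
          rw [Finset.mul_sum]; exact Finset.sum_congr rfl fun i _ => mul_comm _ _
        rw [this, ← Finset.mul_sum]
        ring
      rw [Finset.sum_insert ha, hpair]
      ring
end Core2


section Transfer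
variable {Ω : Type*} [MeasurableSpace Ω] {X : Type*} [MeasurableSpace X]
  {μ : Measure Ω} [IsProbabilityMeasure μ]

lemma map_fun_eq_pi {ι : Type*} [Fintype ι] {f : ι → Ω → X}
    (hmeas : ∀ i, Measurable (f i))
    (hind : iIndepFun f μ) :
    μ.map (fun ω i => f i ω) = Measure.pi (fun i => μ.map (f i)) := by
  haveI : ∀ i, IsProbabilityMeasure (μ.map (f i)) := fun i =>
    Measure.isProbabilityMeasure_map (hmeas i).aemeasurable
  refine (Measure.pi_eq fun s hs => ?_).symm
  rw [Measure.map_apply (measurable_pi_lambda _ hmeas) (MeasurableSet.univ_pi hs)]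
  have hpre : (fun ω i => f i ω) ⁻¹' Set.pi Set.univ s = ⋂ i, f i ⁻¹' s i := by
    ext ω; simp [Set.mem_pi]
  rw [hpre, hind.meas_iInter (fun i => ⟨s i, hs i, rfl⟩)]
  exact Finset.prod_congr rfl fun i _ => (Measure.map_apply (hmeas i) (hs i)).symm

/-- Independence is preserved by injective reindexing. -/
lemma iIndepFun_comp_of_injective {ι ι' : Type*} {f : ι → Ω → X} {g : ι' → ι}
    (hind : iIndepFun f μ)
    (hg : Function.Injective g) :
    iIndepFun (fun i => f (g i)) μ := by
  classical
  rw [iIndepFun_iff_measure_inter_preimage_eq_mul]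
  intro S sets hsets
  have h := (iIndepFun_iff_measure_inter_preimage_eq_mul.mp hind) (S.image g)
    (sets := fun j => ⋃ i ∈ S.filter (fun i => g i = j), sets i) ?_
  · have hinter : (⋂ i ∈ S, f (g i) ⁻¹' sets i)
        = ⋂ j ∈ S.image g, f j ⁻¹' (⋃ i ∈ S.filter (fun i => g i = j), sets i) := by
      ext ω
      simp only [Set.mem_iInter, Set.mem_preimage, Finset.mem_image, Set.mem_iUnion,
        Finset.mem_filter]
      constructor
      · rintro h j ⟨i, hi, rfl⟩
        exact ⟨i, ⟨hi, rfl⟩, h i hi⟩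
      · rintro h i hi
        obtain ⟨i', ⟨hi', hgi⟩, hmem⟩ := h (g i) ⟨i, hi, rfl⟩
        rwa [hg hgi] at hmem
    rw [hinter, h, Finset.prod_image (fun a ha b hb hab => hg hab)]
    refine Finset.prod_congr rfl fun i hi => ?_
    congr 1
    ext ω
    simp only [Set.mem_preimage, Set.mem_iUnion, Finset.mem_filter]
    constructor
    · rintro ⟨i', ⟨hi', hgi⟩, hmem⟩
      rwa [hg hgi] at hmem
    · intro hmem
      exact ⟨i, ⟨hi, rfl⟩, hmem⟩
  · intro j hj
    refine MeasurableSet.biUnion (Finset.countable_toSet _) fun i hi => ?_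
    exact hsets i (Finset.mem_filter.mp hi).1
end Transfer


variable {Ω : Type*} [MeasurableSpace Ω] {𝒳 : Type*} [MeasurableSpace 𝒳]

/-- `σ_{i,j}² = E w_{i,j}(ξᵢ, ξⱼ)²`. -/
noncomputable def sigmaSq {n : ℕ} (μ : Measure Ω) (w : Fin n → Fin n → 𝒳 → 𝒳 → ℝ)
    (ξ : Fin n → Ω → 𝒳) (i j : Fin n) : ℝ :=
  ∫ ω, (w i j (ξ i ω) (ξ j ω)) ^ 2 ∂μ

/-- The influence of coordinate `k`: `Inf_k = Σ_{i<k} σ_{i,k}² + Σ_{j>k} σ_{k,j}²`. -/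
noncomputable def influence {n : ℕ} (μ : Measure Ω) (w : Fin n → Fin n → 𝒳 → 𝒳 → ℝ)
    (ξ : Fin n → Ω → 𝒳) (k : Fin n) : ℝ :=
  ∑ i ∈ Finset.Iio k, sigmaSq μ w ξ i k + ∑ j ∈ Finset.Ioi k, sigmaSq μ w ξ k j

/-- Fourth moment bound for the swapped increment in the Lindeberg step:
`E[(W_k − W_{k,0})⁴] ≤ 3 ρ Inf_k²`, where
`W_k − W_{k,0} = Σ_{i<k} w_{i,k}(ηᵢ,ξ_k) + Σ_{j>k} w_{k,j}(ξ_k,ξⱼ)`. -/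
theorem fourth_moment_increment_le
    (μ : Measure Ω) [IsProbabilityMeasure μ]
    [TopologicalSpace 𝒳] [PolishSpace 𝒳] [BorelSpace 𝒳]
    {n : ℕ} (ξ η : Fin n → Ω → 𝒳)
    (hmeasξ : ∀ i, Measurable (ξ i)) (hmeasη : ∀ i, Measurable (η i))
    (hindep : iIndepFun (Sum.elim ξ η) μ)
    (w : Fin n → Fin n → 𝒳 → 𝒳 → ℝ)
    (hw_meas : ∀ i j, Measurable (fun q : 𝒳 × 𝒳 => w i j q.1 q.2))
    (hint4 : ∀ i j, i < j →
      Integrable (fun ω => (w i j (ξ i ω) (ξ j ω)) ^ 4) μ ∧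
      Integrable (fun ω => (w i j (η i ω) (ξ j ω)) ^ 4) μ)
    (hdeg : ∀ i j, i < j → ∀ a : 𝒳,
      (∫ ω, w i j (ξ i ω) a ∂μ) = 0 ∧ (∫ ω, w i j a (ξ j ω) ∂μ) = 0 ∧
      (∫ ω, w i j (η i ω) a ∂μ) = 0 ∧ (∫ ω, w i j a (η j ω) ∂μ) = 0)
    (ρ : ℝ) (hρ : 0 ≤ ρ)
    (hdom : ∀ i j, i < j →
      (∫ ω, (w i j (ξ i ω) (ξ j ω)) ^ 4 ∂μ) ≤ ρ * (sigmaSq μ w ξ i j) ^ 2 ∧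
      (∫ ω, (w i j (η i ω) (ξ j ω)) ^ 4 ∂μ) ≤ ρ * (sigmaSq μ w ξ i j) ^ 2)
    (k : Fin n) :
    (∫ ω, (∑ i ∈ Finset.Iio k, w i k (η i ω) (ξ k ω) +
            ∑ j ∈ Finset.Ioi k, w k j (ξ k ω) (ξ j ω)) ^ 4 ∂μ) ≤
      3 * ρ * (influence μ w ξ k) ^ 2 := by
  classical
  obtain ⟨m, rfl⟩ : ∃ m, n = m + 1 := ⟨n - 1, (Nat.succ_pred_eq_of_pos k.pos).symm⟩
  set ζ : Fin (m+1) → Ω → 𝒳 := fun i => if i < k then η i else ξ i with hζdef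
  have hζk : ζ k = ξ k := by simp [hζdef]
  have hζlt : ∀ i, i < k → ζ i = η i := fun i h => by simp [hζdef, h]
  have hζgt : ∀ i, ¬ i < k → ζ i = ξ i := fun i h => by simp [hζdef, h]
  have hζmeas : ∀ i, Measurable (ζ i) := by
    intro i; by_cases h : i < k
    · rw [hζlt i h]; exact hmeasη i
    · rw [hζgt i h]; exact hmeasξ i
  have hζindep : iIndepFun ζ μ := by
    have hginj : Function.Injective
        (fun i : Fin (m+1) => if i < k then (Sum.inr i : Fin (m+1) ⊕ Fin (m+1)) else Sum.inl i) := by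
      intro i j hij
      by_cases hi : i < k <;> by_cases hj : j < k <;> simp [hi, hj] at hij <;> exact hij
    have h := iIndepFun_comp_of_injective hindep hginj
    have heq : (fun i : Fin (m+1) => Sum.elim ξ η
        (if i < k then (Sum.inr i : Fin (m+1) ⊕ Fin (m+1)) else Sum.inl i)) = ζ := by
      funext i; by_cases hi : i < k <;> simp [hζdef, hi]
    rwa [heq] at h
  set ν : Fin (m+1) → Measure 𝒳 := fun i => μ.map (ζ i) with hνdef
  haveI hνprob : ∀ i, IsProbabilityMeasure (ν i) := fun i =>
    Measure.isProbabilityMeasure_map (hζmeas i).aemeasurable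
  set Φ : Ω → (Fin (m+1) → 𝒳) := fun ω i => ζ i ω with hΦdef
  have hΦmeas : Measurable Φ := measurable_pi_lambda _ hζmeas
  have hmap : μ.map Φ = Measure.pi ν := map_fun_eq_pi hζmeas hζindep
  -- kernels reindexed by Fin m
  set f : Fin m → 𝒳 → 𝒳 → ℝ := fun j t s =>
    if k.succAbove j < k then w (k.succAbove j) k s t else w k (k.succAbove j) t s with hfdef
  set v : Fin m → ℝ := fun j =>
    if k.succAbove j < k then sigmaSq μ w ξ (k.succAbove j) k
    else sigmaSq μ w ξ k (k.succAbove j) with hvdef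
  have hv0 : ∀ j, 0 ≤ v j := by
    intro j; rw [hvdef]
    by_cases h : k.succAbove j < k <;>
      simp only [h, if_pos, if_neg, if_true, if_false, sigmaSq] <;>
      exact integral_nonneg fun ω => sq_nonneg _
  have hfmeas : ∀ j, Measurable (fun p : 𝒳 × 𝒳 => f j p.1 p.2) := by
    intro j; rw [hfdef]
    by_cases h : k.succAbove j < k
    · simp only [h, if_true]
      exact (hw_meas _ k).comp (measurable_snd.prodMk measurable_fst)
    · simp only [h, if_false]
      exact hw_meas k _
  have hgtlt : ∀ j : Fin m, ¬ k.succAbove j < k → k < k.succAbove j := fun j h =>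
    lt_of_le_of_ne (not_lt.mp h) (Fin.ne_succAbove k j)
  -- per-j facts on Ω
  have hWint4 : ∀ j, Integrable (fun ω => (f j (ξ k ω) (ζ (k.succAbove j) ω)) ^ 4) μ := by
    intro j; by_cases h : k.succAbove j < k
    · rw [hζlt _ h]; simp only [hfdef, h, if_true]; exact (hint4 _ k h).2
    · rw [hζgt _ h]; simp only [hfdef, h, if_false]; exact (hint4 k _ (hgtlt j h)).1
  have hWdom : ∀ j, (∫ ω, (f j (ξ k ω) (ζ (k.succAbove j) ω)) ^ 4 ∂μ) ≤ ρ * v j ^ 2 := by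
    intro j; by_cases h : k.succAbove j < k
    · rw [hζlt _ h]; simp only [hfdef, hvdef, h, if_true]; exact (hdom _ k h).2
    · rw [hζgt _ h]; simp only [hfdef, hvdef, h, if_false]; exact (hdom k _ (hgtlt j h)).1
  have hdeg' : ∀ j (t : 𝒳), ∫ s, f j t s ∂ν (k.succAbove j) = 0 := by
    intro j t
    have hm : Measurable (fun s => f j t s) :=
      (hfmeas j).comp (measurable_const.prodMk measurable_id)
    rw [hνdef]
    rw [integral_map (hζmeas _).aemeasurable hm.aestronglyMeasurable]
    by_cases h : k.succAbove j < k
    · rw [hζlt _ h]; simp only [hfdef, h, if_true]; exact (hdeg _ k h t).2.2.1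
    · rw [hζgt _ h]; simp only [hfdef, h, if_false]; exact (hdeg k _ (hgtlt j h) t).2.1
  -- reindex sums
  have hsum : ∀ F : Fin (m+1) → ℝ,
      ((∑ i ∈ Finset.Iio k, F i) + ∑ i ∈ Finset.Ioi k, F i) = ∑ j : Fin m, F (k.succAbove j) := by
    intro F
    have hdisj : Disjoint (Finset.Iio k) (Finset.Ioi k) := by
      rw [Finset.disjoint_left]
      intro i hi hi'
      exact absurd (Finset.mem_Ioi.mp hi') (not_lt_of_gt (Finset.mem_Iio.mp hi))
    have hun : Finset.Iio k ∪ Finset.Ioi k = ({k}ᶜ : Finset (Fin (m+1))) := by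
      ext i
      simp [lt_or_lt_iff_ne]
    rw [← Finset.sum_union hdisj, hun, ← Fin.image_succAbove_univ k,
      Finset.sum_image (fun a _ b _ h => Fin.succAbove_right_injective h)]
  have hG : ∀ ω, (∑ i ∈ Finset.Iio k, w i k (η i ω) (ξ k ω) +
      ∑ j ∈ Finset.Ioi k, w k j (ξ k ω) (ξ j ω))
      = ∑ j : Fin m, f j (ξ k ω) (ζ (k.succAbove j) ω) := by
    intro ω
    have h1 : (∑ i ∈ Finset.Iio k, w i k (η i ω) (ξ k ω)) =
        ∑ i ∈ Finset.Iio k, (if i < k then w i k (η i ω) (ξ k ω)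
          else w k i (ξ k ω) (ξ i ω)) :=
      Finset.sum_congr rfl fun i hi => by rw [if_pos (Finset.mem_Iio.mp hi)]
    have h2 : (∑ i ∈ Finset.Ioi k, w k i (ξ k ω) (ξ i ω)) =
        ∑ i ∈ Finset.Ioi k, (if i < k then w i k (η i ω) (ξ k ω)
          else w k i (ξ k ω) (ξ i ω)) :=
      Finset.sum_congr rfl fun i hi => by
        rw [if_neg (not_lt_of_gt (Finset.mem_Ioi.mp hi))]
    rw [h1, h2, hsum]
    refine Finset.sum_congr rfl fun j _ => ?_
    by_cases h : k.succAbove j < k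
    · rw [if_pos h, hζlt _ h]; simp only [hfdef, h, if_true]
    · rw [if_neg h, hζgt _ h]; simp only [hfdef, h, if_false]
  have hinf : influence μ w ξ k = ∑ j : Fin m, v j := by
    rw [influence]
    have h1 : (∑ i ∈ Finset.Iio k, sigmaSq μ w ξ i k) =
        ∑ i ∈ Finset.Iio k, (if i < k then sigmaSq μ w ξ i k else sigmaSq μ w ξ k i) :=
      Finset.sum_congr rfl fun i hi => by rw [if_pos (Finset.mem_Iio.mp hi)]
    have h2 : (∑ i ∈ Finset.Ioi k, sigmaSq μ w ξ k i) =
        ∑ i ∈ Finset.Ioi k, (if i < k then sigmaSq μ w ξ i k else sigmaSq μ w ξ k i) :=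
      Finset.sum_congr rfl fun i hi => by
        rw [if_neg (not_lt_of_gt (Finset.mem_Ioi.mp hi))]
    rw [h1, h2, hsum]
  simp_rw [hG]
  rw [hinf]
  -- measurability on the product space
  have hZmeas : ∀ j, Measurable (fun x : Fin (m+1) → 𝒳 => f j (x k) (x (k.succAbove j))) := by
    intro j
    have h : Measurable ((fun p : 𝒳 × 𝒳 => f j p.1 p.2) ∘
        (fun x : Fin (m+1) → 𝒳 => (x k, x (k.succAbove j)))) :=
      (hfmeas j).comp ((measurable_pi_apply k).prodMk (measurable_pi_apply (k.succAbove j)))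
    exact h
  have hG4meas : Measurable (fun x : Fin (m+1) → 𝒳 =>
      (∑ j : Fin m, f j (x k) (x (k.succAbove j))) ^ 4) :=
    (Finset.measurable_sum univ fun j _ => hZmeas j).pow_const 4
  -- transfer the integral to the product space
  have hstep1 : (∫ ω, (∑ j : Fin m, f j (ξ k ω) (ζ (k.succAbove j) ω)) ^ 4 ∂μ)
      = ∫ x, (∑ j : Fin m, f j (x k) (x (k.succAbove j))) ^ 4 ∂(Measure.pi ν) := by
    rw [← hmap, integral_map hΦmeas.aemeasurable hG4meas.aestronglyMeasurable]
    refine integral_congr_ae (Filter.Eventually.of_forall fun ω => ?_)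
    simp only [hΦdef]
    rw [hζk]
  rw [hstep1]
  -- integrability of single coordinates on pi
  have hZint4 : ∀ j, Integrable (fun x : Fin (m+1) → 𝒳 =>
      (f j (x k) (x (k.succAbove j))) ^ 4) (Measure.pi ν) := by
    intro j
    rw [← hmap,
      integrable_map_measure ((hZmeas j).pow_const 4).aestronglyMeasurable hΦmeas.aemeasurable]
    have : ((fun x : Fin (m+1) → 𝒳 => (f j (x k) (x (k.succAbove j))) ^ 4) ∘ Φ)
        = fun ω => (f j (ξ k ω) (ζ (k.succAbove j) ω)) ^ 4 := by
      funext ω; simp only [Function.comp_apply, hΦdef]; rw [hζk]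
    rw [this]
    exact hWint4 j
  -- integrability of the 4th power of the sum on pi
  have hG4int : Integrable (fun x : Fin (m+1) → 𝒳 =>
      (∑ j : Fin m, f j (x k) (x (k.succAbove j))) ^ 4) (Measure.pi ν) := by
    have hbnd : Integrable (fun x : Fin (m+1) → 𝒳 =>
        ((Finset.univ : Finset (Fin m)).card : ℝ) ^ 3
          * ∑ j : Fin m, (f j (x k) (x (k.succAbove j))) ^ 4) (Measure.pi ν) :=
      (integrable_finset_sum _ fun j _ => hZint4 j).const_mul _
    refine hbnd.mono' hG4meas.aestronglyMeasurable ?_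
    filter_upwards with x
    rw [Real.norm_eq_abs, abs_of_nonneg (by positivity)]
    exact sum_pow_four_le _
  -- split off coordinate k
  have hmp := measurePreserving_piFinSuccAbove (α := fun _ : Fin (m+1) => 𝒳) ν k
  set e := MeasurableEquiv.piFinSuccAbove (fun _ : Fin (m+1) => 𝒳) k with hedef
  set P := (ν k).prod (Measure.pi fun j => ν (k.succAbove j)) with hPdef
  have hmpsymm : MeasurePreserving e.symm P (Measure.pi ν) := MeasurePreserving.symm e hmp
  have hesymm : ∀ p : 𝒳 × (Fin m → 𝒳), ∀ i,
      e.symm p i = Fin.insertNth (α := fun _ : Fin (m+1) => 𝒳) k p.1 p.2 i := by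
    intro p i
    simp [hedef, MeasurableEquiv.piFinSuccAbove]
    rfl
  have hHG : ∀ p : 𝒳 × (Fin m → 𝒳),
      (∑ j : Fin m, f j (e.symm p k) (e.symm p (k.succAbove j))) ^ 4
        = (∑ j : Fin m, f j p.1 (p.2 j)) ^ 4 := by
    intro p
    congr 1
    refine Finset.sum_congr rfl fun j _ => ?_
    rw [hesymm p k, hesymm p (k.succAbove j), Fin.insertNth_apply_same,
      Fin.insertNth_apply_succAbove (α := fun _ : Fin (m+1) => 𝒳)]
  have hstep2 : (∫ x, (∑ j : Fin m, f j (x k) (x (k.succAbove j))) ^ 4 ∂(Measure.pi ν))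
      = ∫ p, (∑ j : Fin m, f j p.1 (p.2 j)) ^ 4 ∂P := by
    rw [← hmpsymm.integral_comp' (fun x : Fin (m+1) → 𝒳 =>
      (∑ j : Fin m, f j (x k) (x (k.succAbove j))) ^ 4)]
    exact integral_congr_ae (Filter.Eventually.of_forall fun p => hHG p)
  rw [hstep2]
  -- abbreviations
  set κ' : Fin m → Measure 𝒳 := fun j => ν (k.succAbove j) with hκ'def
  -- joint law of (ζ k, ζ (succAbove j)) is a product measure
  have hpairmap : ∀ j : Fin m, μ.map (fun ω => (ζ k ω, ζ (k.succAbove j) ω))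
      = (ν k).prod (κ' j) := by
    intro j
    exact (indepFun_iff_map_prod_eq_prod_map_map (hζmeas k).aemeasurable
      (hζmeas (k.succAbove j)).aemeasurable).mp (hζindep.indepFun (Fin.ne_succAbove k j))
  have hprodint4 : ∀ j : Fin m, Integrable (fun p : 𝒳 × 𝒳 => (f j p.1 p.2) ^ 4)
      ((ν k).prod (κ' j)) := by
    intro j
    rw [← hpairmap j, integrable_map_measure ((hfmeas j).pow_const 4).aestronglyMeasurable
      (((hζmeas k).prodMk (hζmeas (k.succAbove j))).aemeasurable)]
    have h : ((fun p : 𝒳 × 𝒳 => (f j p.1 p.2) ^ 4) ∘ fun ω => (ζ k ω, ζ (k.succAbove j) ω))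
        = fun ω => (f j (ξ k ω) (ζ (k.succAbove j) ω)) ^ 4 := by
      funext ω; simp only [Function.comp_apply]; rw [hζk]
    rw [h]
    exact hWint4 j
  have hM4int : ∀ j : Fin m, Integrable (fun t => ∫ s, (f j t s) ^ 4 ∂κ' j) (ν k) :=
    fun j => (hprodint4 j).integral_prod_left
  have hM4nonneg : ∀ (j : Fin m) (t : 𝒳), 0 ≤ ∫ s, (f j t s) ^ 4 ∂κ' j :=
    fun j t => integral_nonneg fun s => by positivity
  have hM4val : ∀ j : Fin m, (∫ t, (∫ s, (f j t s) ^ 4 ∂κ' j) ∂ν k)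
      = ∫ ω, (f j (ξ k ω) (ζ (k.succAbove j) ω)) ^ 4 ∂μ := by
    intro j
    have h1 : (∫ t, (∫ s, (f j t s) ^ 4 ∂κ' j) ∂ν k)
        = ∫ p : 𝒳 × 𝒳, (f j p.1 p.2) ^ 4 ∂((ν k).prod (κ' j)) :=
      (integral_prod _ (hprodint4 j)).symm
    rw [h1, ← hpairmap j, integral_map (((hζmeas k).prodMk (hζmeas (k.succAbove j))).aemeasurable)
      ((hfmeas j).pow_const 4).aestronglyMeasurable]
    refine integral_congr_ae (Filter.Eventually.of_forall fun ω => ?_)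
    simp only
    rw [hζk]
  have hM4bound : ∀ j : Fin m, (∫ t, (∫ s, (f j t s) ^ 4 ∂κ' j) ∂ν k) ≤ ρ * v j ^ 2 := by
    intro j; rw [hM4val j]; exact hWdom j
  -- a.e. section integrability
  have hsec : ∀ᵐ t ∂ν k, ∀ j : Fin m, Integrable (fun s => (f j t s) ^ 4) (κ' j) := by
    rw [ae_all_iff]
    intro j
    exact (hprodint4 j).prod_right_ae
  have hsecmeas : ∀ (j : Fin m) (t : 𝒳), Measurable (fun s => f j t s) := by
    intro j t
    have h : Measurable ((fun p : 𝒳 × 𝒳 => f j p.1 p.2) ∘ fun s : 𝒳 => (t, s)) :=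
      (hfmeas j).comp (measurable_const.prodMk measurable_id)
    exact h
  -- integrability of the full fourth power on the product space
  have hHint : Integrable (fun p : 𝒳 × (Fin m → 𝒳) => (∑ j : Fin m, f j p.1 (p.2 j)) ^ 4) P := by
    have h0 : Integrable (fun x : Fin (m+1) → 𝒳 =>
        (∑ j : Fin m, f j (x k) (x (k.succAbove j))) ^ 4) (P.map e.symm) := by
      rw [hmpsymm.map_eq]; exact hG4int
    have h1 := (integrable_map_measure hG4meas.aestronglyMeasurable
      e.symm.measurable.aemeasurable).mp h0
    exact h1.congr (Filter.Eventually.of_forall fun p => hHG p)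
  -- the conditional fourth moment identity, for a.e. value of the k-th coordinate
  have hae : ∀ᵐ t ∂ν k,
      (∫ y, (∑ j : Fin m, f j t (y j)) ^ 4 ∂Measure.pi κ')
        = (∑ j : Fin m, ∫ s, (f j t s) ^ 4 ∂κ' j)
          + 3 * ∑ j : Fin m, ∑ l ∈ Finset.univ.erase j,
              (∫ s, (f j t s) ^ 2 ∂κ' j) * (∫ s, (f l t s) ^ 2 ∂κ' l) := by
    filter_upwards [hsec] with t ht
    exact (pi_moments (κ := κ') (f := fun j s => f j t s)
      (fun j => hsecmeas j t) ht (fun j => hdeg' j t) Finset.univ).2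
  -- measurability & integrability of conditional second moments
  have hM2sm : ∀ j : Fin m, StronglyMeasurable (fun t => ∫ s, (f j t s) ^ 2 ∂κ' j) := by
    intro j
    have h : StronglyMeasurable (fun t => ∫ s, (fun p : 𝒳 × 𝒳 => (f j p.1 p.2) ^ 2) (t, s) ∂κ' j) :=
      ((hfmeas j).pow_const 2).stronglyMeasurable.integral_prod_right'
    exact h
  have hM2nonneg : ∀ (j : Fin m) (t : 𝒳), 0 ≤ ∫ s, (f j t s) ^ 2 ∂κ' j :=
    fun j t => integral_nonneg fun s => sq_nonneg _
  have hM2sq_le : ∀ j : Fin m, ∀ᵐ t ∂ν k,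
      (∫ s, (f j t s) ^ 2 ∂κ' j) ^ 2 ≤ ∫ s, (f j t s) ^ 4 ∂κ' j := by
    intro j
    filter_upwards [hsec] with t ht
    have hint2 : Integrable (fun s => (f j t s) ^ 2) (κ' j) :=
      integrable_pow_of_integrable_pow_four (hsecmeas j t).aestronglyMeasurable (ht j)
        (by norm_num)
    have hint4' : Integrable (fun s => ((f j t s) ^ 2) ^ 2) (κ' j) := by
      have h : (fun s => ((f j t s) ^ 2) ^ 2) = fun s => (f j t s) ^ 4 :=
        funext fun s => by ring
      rw [h]; exact ht j
    have h := sq_integral_le_integral_sq hint2 hint4'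
    have h2 : (∫ s, ((f j t s) ^ 2) ^ 2 ∂κ' j) = ∫ s, (f j t s) ^ 4 ∂κ' j :=
      integral_congr_ae (Filter.Eventually.of_forall fun s => by ring)
    rwa [h2] at h
  have hM2sqint : ∀ j : Fin m,
      Integrable (fun t => (∫ s, (f j t s) ^ 2 ∂κ' j) ^ 2) (ν k) := by
    intro j
    refine (hM4int j).mono'
      (((continuous_pow 2).comp_stronglyMeasurable (hM2sm j)).aestronglyMeasurable) ?_
    filter_upwards [hM2sq_le j] with t ht
    rw [Real.norm_eq_abs, abs_of_nonneg (sq_nonneg _)]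
    exact ht
  have hM2M2int : ∀ j l : Fin m,
      Integrable (fun t => (∫ s, (f j t s) ^ 2 ∂κ' j) * (∫ s, (f l t s) ^ 2 ∂κ' l)) (ν k) := by
    intro j l
    have hbd : Integrable (fun t => (∫ s, (f j t s) ^ 4 ∂κ' j)
        + (∫ s, (f l t s) ^ 4 ∂κ' l)) (ν k) := by
      exact (hM4int j).add (hM4int l)
    refine hbd.mono' ((hM2sm j).mul (hM2sm l)).aestronglyMeasurable ?_
    filter_upwards [hM2sq_le j, hM2sq_le l] with t htj htl
    rw [Real.norm_eq_abs, abs_of_nonneg (mul_nonneg (hM2nonneg j t) (hM2nonneg l t))]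
    nlinarith [sq_nonneg ((∫ s, (f j t s) ^ 2 ∂κ' j) - (∫ s, (f l t s) ^ 2 ∂κ' l)),
      hM4nonneg j t, hM4nonneg l t]
  -- bound on the squared second moments
  have hsqb : ∀ j : Fin m, (∫ t, (∫ s, (f j t s) ^ 2 ∂κ' j) ^ 2 ∂ν k) ≤ ρ * v j ^ 2 := by
    intro j
    exact le_trans (integral_mono_ae (hM2sqint j) (hM4int j) (hM2sq_le j)) (hM4bound j)
  -- Cauchy–Schwarz bound for the cross terms
  have hcross : ∀ j l : Fin m,
      (∫ t, (∫ s, (f j t s) ^ 2 ∂κ' j) * (∫ s, (f l t s) ^ 2 ∂κ' l) ∂ν k)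
        ≤ ρ * (v j * v l) := by
    intro j l
    have hs : Real.sqrt ρ * Real.sqrt ρ = ρ := Real.mul_self_sqrt hρ
    calc (∫ t, (∫ s, (f j t s) ^ 2 ∂κ' j) * (∫ s, (f l t s) ^ 2 ∂κ' l) ∂ν k)
        ≤ Real.sqrt (∫ t, (∫ s, (f j t s) ^ 2 ∂κ' j) ^ 2 ∂ν k)
          * Real.sqrt (∫ t, (∫ s, (f l t s) ^ 2 ∂κ' l) ^ 2 ∂ν k) :=
          integral_mul_le_sqrt_mul_sqrt (hM2sqint j) (hM2sqint l) (hM2M2int j l)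
      _ ≤ Real.sqrt (ρ * v j ^ 2) * Real.sqrt (ρ * v l ^ 2) :=
          mul_le_mul (Real.sqrt_le_sqrt (hsqb j)) (Real.sqrt_le_sqrt (hsqb l))
            (Real.sqrt_nonneg _) (Real.sqrt_nonneg _)
      _ = ρ * (v j * v l) := by
          rw [Real.sqrt_mul hρ (v j ^ 2), Real.sqrt_mul hρ (v l ^ 2),
            Real.sqrt_sq (hv0 j), Real.sqrt_sq (hv0 l),
            show (Real.sqrt ρ * v j) * (Real.sqrt ρ * v l)
              = (Real.sqrt ρ * Real.sqrt ρ) * (v j * v l) from by ring, hs]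
  -- put everything together
  calc (∫ p : 𝒳 × (Fin m → 𝒳), (∑ j : Fin m, f j p.1 (p.2 j)) ^ 4 ∂P)
      = ∫ t, (∫ y, (∑ j : Fin m, f j t (y j)) ^ 4 ∂Measure.pi κ') ∂ν k :=
        integral_prod _ hHint
    _ = ∫ t, ((∑ j : Fin m, ∫ s, (f j t s) ^ 4 ∂κ' j)
          + 3 * ∑ j : Fin m, ∑ l ∈ Finset.univ.erase j,
              (∫ s, (f j t s) ^ 2 ∂κ' j) * (∫ s, (f l t s) ^ 2 ∂κ' l)) ∂ν k :=
        integral_congr_ae hae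
    _ = (∑ j : Fin m, ∫ t, (∫ s, (f j t s) ^ 4 ∂κ' j) ∂ν k)
          + 3 * ∑ j : Fin m, ∑ l ∈ Finset.univ.erase j,
              ∫ t, (∫ s, (f j t s) ^ 2 ∂κ' j) * (∫ s, (f l t s) ^ 2 ∂κ' l) ∂ν k := by
        rw [integral_add (integrable_finset_sum _ fun j _ => hM4int j)
          ((integrable_finset_sum _ fun j _ =>
            integrable_finset_sum _ fun l _ => hM2M2int j l).const_mul 3),
          integral_finset_sum _ (fun j _ => hM4int j), integral_const_mul,
          integral_finset_sum _ (fun j _ => integrable_finset_sum _ fun l _ => hM2M2int j l)]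
        congr 2
        refine Finset.sum_congr rfl fun j _ => ?_
        rw [integral_finset_sum _ (fun l _ => hM2M2int j l)]
    _ ≤ (∑ j : Fin m, ρ * v j ^ 2)
          + 3 * ∑ j : Fin m, ∑ l ∈ Finset.univ.erase j, ρ * (v j * v l) := by
        refine add_le_add (Finset.sum_le_sum fun j _ => hM4bound j) ?_
        refine mul_le_mul_of_nonneg_left ?_ (by norm_num)
        exact Finset.sum_le_sum fun j _ => Finset.sum_le_sum fun l _ => hcross j l
    _ ≤ 3 * ρ * (∑ j : Fin m, v j) ^ 2 := by
        have hsq : (∑ j : Fin m, v j) ^ 2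
            = ∑ j : Fin m, v j ^ 2
              + ∑ j : Fin m, ∑ l ∈ Finset.univ.erase j, v j * v l := by
          rw [sq, Finset.sum_mul_sum, ← Finset.sum_add_distrib]
          refine Finset.sum_congr rfl fun j _ => ?_
          rw [← Finset.add_sum_erase _ _ (Finset.mem_univ j), ← sq]
        have h1 : (0:ℝ) ≤ ∑ j : Fin m, v j ^ 2 :=
          Finset.sum_nonneg fun j _ => sq_nonneg _
        have h2 : (0:ℝ) ≤ ∑ j : Fin m, ∑ l ∈ Finset.univ.erase j, v j * v l :=
          Finset.sum_nonneg fun j _ => Finset.sum_nonneg fun l _ =>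
            mul_nonneg (hv0 j) (hv0 l)
        have e1 : (∑ j : Fin m, ρ * v j ^ 2) = ρ * ∑ j : Fin m, v j ^ 2 := by
          rw [Finset.mul_sum]
        have e2 : (∑ j : Fin m, ∑ l ∈ Finset.univ.erase j, ρ * (v j * v l))
            = ρ * ∑ j : Fin m, ∑ l ∈ Finset.univ.erase j, v j * v l := by
          rw [Finset.mul_sum]
          refine Finset.sum_congr rfl fun j _ => ?_
          rw [Finset.mul_sum]
        rw [e1, e2, hsq]
        nlinarith
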